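/- Let p(s) = s³-3s²+1, q(s) = s³-s²+s, and f₂(x,y) = p(y)x + q(y). Then the curves f₂(x,y) = 0 and f₂(y,x) = 0 have intersection multiplicity exactly 3 at each of the three points (0,0), (1,1), (-1,-1). -/

import Mathlib

noncomputable section

open MvPolynomial

/-- The polynomial ring ℂ[x,y]. -/
abbrev R2 : Type := MvPolynomial (Fin 2) ℂ

/-- f₂(x,y) = p(y)x + q(y) with p(s) = s³-3s²+1, q(s) = s³-s²+s. -/
noncomputable def f2 : R2 :=
  ((X 1)^3 - 3*(X 1)^2 + 1) * X 0 + ((X 1)^3 - (X 1)^2 + X 1)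

/-- f₂(y,x), i.e. f₂ with the two variables swapped. -/
noncomputable def f2s : R2 :=
  ((X 0)^3 - 3*(X 0)^2 + 1) * X 1 + ((X 0)^3 - (X 0)^2 + X 0)

namespace Stmt12Aux

/-- The local model algebra ℂ[T]/(T³). -/
abbrev Aa : Type := AdjoinRoot ((Polynomial.X : Polynomial ℂ) ^ 3)

def rA : Aa := AdjoinRoot.root _

lemma rA3 : rA ^ 3 = 0 := by
  have h := AdjoinRoot.mk_self (f := (Polynomial.X : Polynomial ℂ) ^ 3)
  rwa [map_pow, AdjoinRoot.mk_X] at h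

/-- Parametrization map ℂ[x,y] → ℂ[T]. -/
def Fpa (a : ℂ) (φ : Polynomial ℂ) : R2 →ₐ[ℂ] Polynomial ℂ :=
  MvPolynomial.aeval ![φ.comp (Polynomial.X + Polynomial.C a), Polynomial.X + Polynomial.C a]

def psi (a : ℂ) (φ : Polynomial ℂ) : R2 →ₐ[ℂ] Aa :=
  ((Polynomial.aeval rA).comp (Fpa a φ) : R2 →ₐ[ℂ] AdjoinRoot _)

def eps : Aa →ₐ[ℂ] ℂ := AdjoinRoot.liftAlgHom _ (Algebra.ofId ℂ ℂ) 0 (by simp)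

lemma psi_X1 (a : ℂ) (φ : Polynomial ℂ) : psi a φ (X 1) = rA + algebraMap ℂ Aa a := by
  show Polynomial.aeval rA (Fpa a φ (X 1)) = _
  unfold Fpa; rw [MvPolynomial.aeval_X]; simp

lemma psi_X0 (a : ℂ) (φ : Polynomial ℂ) :
    psi a φ (X 0) = Polynomial.aeval (rA + algebraMap ℂ Aa a) φ := by
  show Polynomial.aeval rA (Fpa a φ (X 0)) = _
  unfold Fpa; rw [MvPolynomial.aeval_X]; simp [Polynomial.aeval_comp]

lemma eps_rA : eps rA = 0 := by unfold eps rA; exact AdjoinRoot.liftAlgHom_root _ _ _ _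

lemma eps_psi (a : ℂ) (φ : Polynomial ℂ) (hφ : Polynomial.eval a φ = a) (p : R2) :
    eps (psi a φ p) = MvPolynomial.aeval (fun _ : Fin 2 => a) p := by
  have h : (eps.comp (psi a φ)) = MvPolynomial.aeval (fun _ : Fin 2 => a) := by
    apply MvPolynomial.algHom_ext
    intro i
    fin_cases i
    · rw [AlgHom.comp_apply]
      rw [show X (⟨0, by omega⟩ : Fin 2) = (X 0 : R2) from rfl]
      rw [psi_X0, ← Polynomial.aeval_algHom_apply, map_add, eps_rA, AlgHom.commutes,
        zero_add, MvPolynomial.aeval_X]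
      simp [Polynomial.coe_aeval_eq_eval, hφ]
    · rw [AlgHom.comp_apply]
      rw [show X (⟨1, by omega⟩ : Fin 2) = (X 1 : R2) from rfl]
      rw [psi_X1, map_add, eps_rA, AlgHom.commutes, zero_add, MvPolynomial.aeval_X]
      simp
  calc eps (psi a φ p) = (eps.comp (psi a φ)) p := rfl
    _ = _ := by rw [h]

lemma isUnit_eps (z : Aa) (hz : eps z ≠ 0) : IsUnit z := by
  obtain ⟨g, hg⟩ := AdjoinRoot.mk_surjective z
  have hev : eps z = Polynomial.eval 0 g := by
    rw [← hg]; unfold eps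
    rw [AdjoinRoot.liftAlgHom_mk]
    simp [Polynomial.coe_aeval_eq_eval, Polynomial.coeff_zero_eq_eval_zero]
  have hXdvd : Polynomial.X ∣ g - Polynomial.C (eps z) := by
    rw [Polynomial.X_dvd_iff]
    simp [Polynomial.coeff_sub, Polynomial.coeff_zero_eq_eval_zero, hev]
  obtain ⟨q, hq⟩ := hXdvd
  have hnil : IsNilpotent (z - algebraMap ℂ Aa (eps z)) := by
    refine ⟨3, ?_⟩
    have h1 : z - algebraMap ℂ Aa (eps z) = rA * AdjoinRoot.mk _ q := by
      rw [← hg]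
      show _ = AdjoinRoot.root _ * _
      rw [← AdjoinRoot.mk_X, ← map_mul, ← hq, map_sub, AdjoinRoot.mk_C,
        AdjoinRoot.algebraMap_eq, hg]
    rw [h1, mul_pow, show (rA ^ 3 : Aa) = 0 from rA3, zero_mul]
  have hun : IsUnit (algebraMap ℂ Aa (eps z)) :=
    (isUnit_iff_ne_zero.mpr hz).map (algebraMap ℂ Aa)
  have h2 := hnil.isUnit_add_left_of_commute hun (Commute.all _ _)
  rwa [add_sub_cancel] at h2

/-- Everything with evaluation 0 at (a,a) is in the span. -/
lemma mem_span_of_eval (a : ℂ) (p : R2)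
    (hp : MvPolynomial.aeval (fun _ : Fin 2 => a) p = 0) :
    p ∈ Ideal.span ({X 0 - C a, X 1 - C a} : Set R2) := by
  set m := Ideal.span ({X 0 - C a, X 1 - C a} : Set R2) with hm
  have key : ∀ q : R2, q - C (MvPolynomial.aeval (fun _ : Fin 2 => a) q) ∈ m := by
    intro q
    induction q using MvPolynomial.induction_on with
    | C c => simp
    | add p q hp hq =>
      have h := m.add_mem hp hq
      have heq : p + q - C (MvPolynomial.aeval (fun _ : Fin 2 => a) (p + q))
          = (p - C (MvPolynomial.aeval (fun _ : Fin 2 => a) p))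
            + (q - C (MvPolynomial.aeval (fun _ : Fin 2 => a) q)) := by
        rw [map_add, map_add]; ring
      rwa [heq]
    | mul_X p i hp =>
      have hXi : (X i - C a : R2) ∈ m := by
        fin_cases i
        · exact Ideal.subset_span (by simp)
        · exact Ideal.subset_span (by simp)
      have heq : p * X i - C (MvPolynomial.aeval (fun _ : Fin 2 => a) (p * X i))
          = (p - C (MvPolynomial.aeval (fun _ : Fin 2 => a) p)) * X i
            + C (MvPolynomial.aeval (fun _ : Fin 2 => a) p) * (X i - C a) := by
        rw [map_mul, MvPolynomial.aeval_X, map_mul]; ring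
      rw [heq]
      exact m.add_mem (m.mul_mem_right _ hp) (m.mul_mem_left _ hXi)
  have h := key p
  rwa [hp, map_zero, sub_zero] at h

def Jd (m : Ideal R2) [m.IsPrime] : Ideal (Localization.AtPrime m) :=
  (Ideal.span {f2, f2s}).map (algebraMap R2 (Localization.AtPrime m))

lemma memJ (a : ℂ) (m : Ideal R2) [m.IsPrime]
    (hcompl : ∀ s : R2, MvPolynomial.aeval (fun _ : Fin 2 => a) s ≠ 0 → s ∈ m.primeCompl)
    (s g α β : R2) (hs : MvPolynomial.aeval (fun _ : Fin 2 => a) s ≠ 0)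
    (hcert : s * g = α * f2 + β * f2s) :
    algebraMap R2 (Localization.AtPrime m) g ∈ Jd m := by
  have hf2J : algebraMap R2 (Localization.AtPrime m) f2 ∈ Jd m :=
    Ideal.mem_map_of_mem _ (Ideal.subset_span (by simp))
  have hf2sJ : algebraMap R2 (Localization.AtPrime m) f2s ∈ Jd m :=
    Ideal.mem_map_of_mem _ (Ideal.subset_span (by simp))
  have hsu : IsUnit (algebraMap R2 (Localization.AtPrime m) s) :=
    IsLocalization.map_units _ ⟨s, hcompl s hs⟩
  have h1 : algebraMap R2 (Localization.AtPrime m) (s * g) ∈ Jd m := by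
    rw [hcert, map_add, map_mul, map_mul]
    exact (Jd m).add_mem ((Jd m).mul_mem_left _ hf2J) ((Jd m).mul_mem_left _ hf2sJ)
  rcases hsu with ⟨su, hsu⟩
  have h2 : algebraMap R2 (Localization.AtPrime m) g
      = ↑su⁻¹ * algebraMap R2 (Localization.AtPrime m) (s * g) := by
    rw [map_mul, ← hsu, ← mul_assoc, Units.inv_mul, one_mul]
  rw [h2]
  exact (Jd m).mul_mem_left _ h1

set_option maxHeartbeats 1000000 in
theorem final (a : ℂ) (φ : Polynomial ℂ) (m : Ideal R2) [m.IsPrime]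
    (hφ : Polynomial.eval a φ = a)
    (hψf2 : psi a φ f2 = 0) (hψf2s : psi a φ f2s = 0)
    (hmem : ∀ p : R2, MvPolynomial.aeval (fun _ : Fin 2 => a) p = 0 → p ∈ m)
    (hJ1 : algebraMap R2 (Localization.AtPrime m) (X 0 - Polynomial.aeval (X 1) φ) ∈ Jd m)
    (hJ2 : algebraMap R2 (Localization.AtPrime m) ((X 1 - C a) ^ 3) ∈ Jd m) :
    Module.finrank ℂ ((Localization.AtPrime m) ⧸ Jd m) = 3 := by
  have hunit : ∀ s : m.primeCompl, IsUnit (psi a φ (s : R2)) := by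
    rintro ⟨s, hs⟩
    apply isUnit_eps
    rw [eps_psi a φ hφ]
    intro h0
    exact hs (hmem s h0)
  let G : Localization.AtPrime m →ₐ[ℂ] Aa :=
    IsLocalization.liftAlgHom (M := m.primeCompl) (f := psi a φ) hunit
  have hGalg : ∀ p : R2, G (algebraMap R2 (Localization.AtPrime m) p) = psi a φ p := by
    intro p
    simp only [G, IsLocalization.liftAlgHom_apply, IsLocalization.lift_eq]
    rfl
  have hGJ : ∀ z ∈ Jd m, G z = 0 := by
    intro z hz
    have hle : Jd m ≤ RingHom.ker G.toRingHom := by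
      unfold Jd
      rw [Ideal.map_le_iff_le_comap, Ideal.span_le]
      rintro p hp
      simp only [Set.mem_insert_iff, Set.mem_singleton_iff] at hp
      have hz0 : G (algebraMap R2 (Localization.AtPrime m) p) = 0 := by
        rcases hp with rfl | rfl
        · rw [hGalg]; exact hψf2
        · rw [hGalg]; exact hψf2s
      simpa [Ideal.mem_comap, RingHom.mem_ker] using hz0
    exact hle hz
  let Gq : (Localization.AtPrime m ⧸ Jd m) →ₐ[ℂ] Aa := Ideal.Quotient.liftₐ (Jd m) G hGJ
  have hGq : ∀ y : Localization.AtPrime m, Gq (Ideal.Quotient.mk (Jd m) y) = G y := by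
    intro y
    rw [Ideal.Quotient.liftₐ_apply]; erw [Ideal.Quotient.lift_mk]
  let t : Localization.AtPrime m ⧸ Jd m :=
    Ideal.Quotient.mk (Jd m) (algebraMap R2 (Localization.AtPrime m) (X 1 - C a))
  have ht3 : t ^ 3 = 0 := by
    show Ideal.Quotient.mk _ _ ^ 3 = 0
    rw [← map_pow, ← map_pow, Ideal.Quotient.eq_zero_iff_mem]
    exact hJ2
  let Fq : Aa →ₐ[ℂ] (Localization.AtPrime m ⧸ Jd m) :=
    AdjoinRoot.liftAlgHom _ (Algebra.ofId ℂ _) t (by simpa using ht3)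
  have hFq_r : Fq rA = t := AdjoinRoot.liftAlgHom_root _ _ _ _
  let Θ : R2 →ₐ[ℂ] (Localization.AtPrime m ⧸ Jd m) :=
    (Ideal.Quotient.mkₐ ℂ (Jd m)).comp (IsScalarTower.toAlgHom ℂ R2 (Localization.AtPrime m))
  have hΘ : ∀ p, Θ p = Ideal.Quotient.mk (Jd m) (algebraMap R2 (Localization.AtPrime m) p) :=
    fun p => rfl
  have ht' : t + algebraMap ℂ (Localization.AtPrime m ⧸ Jd m) a = Θ (X 1) := by
    have hCa : algebraMap ℂ (Localization.AtPrime m ⧸ Jd m) a = Θ (C a) := by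
      rw [show (C a : R2) = algebraMap ℂ R2 a from rfl]
      exact (Θ.commutes a).symm
    show Ideal.Quotient.mk (Jd m) (algebraMap R2 (Localization.AtPrime m) (X 1 - C a)) + _ = _
    rw [hCa, hΘ, hΘ, ← RingHom.map_add, ← RingHom.map_add, sub_add_cancel]
  have hkey : ∀ p : R2, Fq (psi a φ p) = Θ p := by
    have h : Fq.comp (psi a φ) = Θ := by
      apply MvPolynomial.algHom_ext
      intro i
      fin_cases i
      · rw [AlgHom.comp_apply, show X (⟨0, by omega⟩ : Fin 2) = (X 0 : R2) from rfl, psi_X0,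
          ← Polynomial.aeval_algHom_apply, map_add, hFq_r, AlgHom.commutes, ht',
          Polynomial.aeval_algHom_apply]
        rw [hΘ, hΘ, Ideal.Quotient.mk_eq_mk_iff_sub_mem, ← map_sub]
        have h' := (Jd m).neg_mem hJ1
        rwa [← map_neg, neg_sub] at h'
      · rw [AlgHom.comp_apply, show X (⟨1, by omega⟩ : Fin 2) = (X 1 : R2) from rfl, psi_X1,
          map_add, hFq_r, AlgHom.commutes]
        exact ht'
    intro p
    calc Fq (psi a φ p) = (Fq.comp (psi a φ)) p := rfl
      _ = Θ p := by rw [h]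
  have hGF : Gq.comp Fq = AlgHom.id ℂ Aa := by
    apply AdjoinRoot.algHom_ext
    rw [AlgHom.comp_apply]
    rw [show Fq (AdjoinRoot.root _) = t from hFq_r]
    show Gq (Ideal.Quotient.mk _ (algebraMap R2 (Localization.AtPrime m) (X 1 - C a))) = _
    rw [hGq, hGalg, map_sub, psi_X1]
    have hCa : psi a φ (C a) = algebraMap ℂ Aa a := by
      rw [show (C a : R2) = algebraMap ℂ R2 a from rfl]
      exact (psi a φ).commutes a
    rw [hCa]
    simp [rA]
  have hFGapply : ∀ y : Localization.AtPrime m, Fq (G y) = Ideal.Quotient.mk (Jd m) y := by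
    have hcomp : (Fq.toRingHom.comp G.toRingHom) = (Ideal.Quotient.mk (Jd m)) := by
      apply IsLocalization.ringHom_ext m.primeCompl
      apply RingHom.ext; intro p
      show Fq (G (algebraMap R2 (Localization.AtPrime m) p))
        = Ideal.Quotient.mk (Jd m) (algebraMap R2 (Localization.AtPrime m) p)
      rw [hGalg, hkey, hΘ]
    intro y
    exact RingHom.congr_fun hcomp y
  have hFG : Fq.comp Gq = AlgHom.id ℂ (Localization.AtPrime m ⧸ Jd m) := by
    apply AlgHom.ext; intro z
    obtain ⟨y, rfl⟩ := Ideal.Quotient.mk_surjective z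
    rw [AlgHom.comp_apply, hGq, hFGapply]
    rfl
  let e : (Localization.AtPrime m ⧸ Jd m) ≃ₐ[ℂ] Aa := AlgEquiv.ofAlgHom Gq Fq hGF hFG
  rw [e.toLinearEquiv.finrank_eq]
  rw [(AdjoinRoot.powerBasis (f := (Polynomial.X : Polynomial ℂ) ^ 3)
      ((Polynomial.monic_X_pow 3).ne_zero)).finrank]
  simp [AdjoinRoot.powerBasis]

/-- Wrapper: from integer-scaled certificates to the multiplicity statement. -/
theorem aux (a c : ℂ) (hc : c ≠ 0) (φ' u v : Polynomial ℂ)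
    (hφa : Polynomial.eval a φ' = c * a)
    (hu : ((Polynomial.X + Polynomial.C a)^3 - 3*(Polynomial.X + Polynomial.C a)^2 + 1)
            * (φ'.comp (Polynomial.X + Polynomial.C a))
          + Polynomial.C c * ((Polynomial.X + Polynomial.C a)^3
            - (Polynomial.X + Polynomial.C a)^2 + (Polynomial.X + Polynomial.C a))
        = Polynomial.X ^ 3 * u)
    (hv : (φ'.comp (Polynomial.X + Polynomial.C a))^3 * (Polynomial.X + Polynomial.C a)
          - 3 * Polynomial.C c * (φ'.comp (Polynomial.X + Polynomial.C a))^2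
            * (Polynomial.X + Polynomial.C a)
          + Polynomial.C c ^ 3 * (Polynomial.X + Polynomial.C a)
          + (φ'.comp (Polynomial.X + Polynomial.C a))^3
          - Polynomial.C c * (φ'.comp (Polynomial.X + Polynomial.C a))^2
          + Polynomial.C c ^ 2 * (φ'.comp (Polynomial.X + Polynomial.C a))
        = Polynomial.X ^ 3 * v)
    (s1 α1 β1 s2 α2 β2 : R2)
    (hs1 : MvPolynomial.aeval (fun _ : Fin 2 => a) s1 ≠ 0)
    (hs2 : MvPolynomial.aeval (fun _ : Fin 2 => a) s2 ≠ 0)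
    (hc1 : s1 * (C c * X 0 - Polynomial.aeval (X 1) φ') = α1 * f2 + β1 * f2s)
    (hc2 : s2 * (X 1 - C a) ^ 3 = α2 * f2 + β2 * f2s) :
    ∀ (m : Ideal R2), m = Ideal.span {X 0 - C a, X 1 - C a} →
      ∀ (_ : m.IsPrime),
        Module.finrank ℂ
          ((Localization.AtPrime m) ⧸
            Ideal.map (algebraMap R2 (Localization.AtPrime m))
              (Ideal.span {f2, f2s})) = 3 := by
  rintro m rfl hP
  haveI := hP
  set m : Ideal R2 := Ideal.span ({X 0 - C a, X 1 - C a} : Set R2) with hm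
  -- the actual parametrization
  set φ : Polynomial ℂ := Polynomial.C c⁻¹ * φ' with hφdef
  have hφ'φ : φ' = Polynomial.C c * φ := by
    rw [hφdef, ← mul_assoc, ← map_mul, mul_inv_cancel₀ hc, map_one, one_mul]
  have hφ : Polynomial.eval a φ = a := by
    rw [hφdef, Polynomial.eval_mul, Polynomial.eval_C, hφa, ← mul_assoc,
      inv_mul_cancel₀ hc, one_mul]
  have hφc : φ'.comp (Polynomial.X + Polynomial.C a)
      = Polynomial.C c * (φ.comp (Polynomial.X + Polynomial.C a)) := by
    rw [hφ'φ, Polynomial.mul_comp, Polynomial.C_comp]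
  -- expansion of Fpa on f2 and f2s
  have hFpa2 : Fpa a φ f2
      = ((Polynomial.X + Polynomial.C a)^3 - 3*(Polynomial.X + Polynomial.C a)^2 + 1)
          * (φ.comp (Polynomial.X + Polynomial.C a))
        + ((Polynomial.X + Polynomial.C a)^3 - (Polynomial.X + Polynomial.C a)^2
          + (Polynomial.X + Polynomial.C a)) := by
    simp only [Fpa, f2, map_add, map_sub, map_mul, map_pow, map_one, map_ofNat,
      MvPolynomial.aeval_X, Matrix.cons_val_zero, Matrix.cons_val_one, Matrix.head_cons]
  have hFpa2s : Fpa a φ f2s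
      = ((φ.comp (Polynomial.X + Polynomial.C a))^3
          - 3*(φ.comp (Polynomial.X + Polynomial.C a))^2 + 1)
          * (Polynomial.X + Polynomial.C a)
        + ((φ.comp (Polynomial.X + Polynomial.C a))^3
          - (φ.comp (Polynomial.X + Polynomial.C a))^2
          + (φ.comp (Polynomial.X + Polynomial.C a))) := by
    simp only [Fpa, f2s, map_add, map_sub, map_mul, map_pow, map_one, map_ofNat,
      MvPolynomial.aeval_X, Matrix.cons_val_zero, Matrix.cons_val_one, Matrix.head_cons]
  -- psi kills f2 and f2s
  have hcu : IsUnit (algebraMap ℂ Aa c) := (isUnit_iff_ne_zero.mpr hc).map (algebraMap ℂ Aa)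
  have hψf2 : psi a φ f2 = 0 := by
    have hu' := hu
    rw [hφc] at hu'
    have h1 : Polynomial.C c * Fpa a φ f2 = Polynomial.X ^ 3 * u := by
      rw [hFpa2]; linear_combination hu'
    have h2 := congrArg (Polynomial.aeval rA) h1
    rw [map_mul, map_mul, map_pow, Polynomial.aeval_X, Polynomial.aeval_C,
      show (rA ^ 3 : Aa) = 0 from rA3, zero_mul] at h2
    exact (hcu.mul_right_eq_zero).mp h2
  have hψf2s : psi a φ f2s = 0 := by
    have hv' := hv
    rw [hφc] at hv'
    have h1 : Polynomial.C c ^ 3 * Fpa a φ f2s = Polynomial.X ^ 3 * v := by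
      rw [hFpa2s]; linear_combination hv'
    have h2 := congrArg (Polynomial.aeval rA) h1
    rw [map_mul, map_mul, map_pow, map_pow, Polynomial.aeval_X, Polynomial.aeval_C,
      show (rA ^ 3 : Aa) = 0 from rA3, zero_mul] at h2
    exact ((hcu.pow 3).mul_right_eq_zero).mp h2
  -- membership machinery
  have hmem : ∀ p : R2, MvPolynomial.aeval (fun _ : Fin 2 => a) p = 0 → p ∈ m :=
    fun p hp => mem_span_of_eval a p hp
  have hcompl : ∀ s : R2, MvPolynomial.aeval (fun _ : Fin 2 => a) s ≠ 0 →
      s ∈ m.primeCompl := by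
    intro s hs hsm
    apply hs
    have hle : m ≤ RingHom.ker (MvPolynomial.aeval (fun _ : Fin 2 => a) : R2 →ₐ[ℂ] ℂ).toRingHom := by
      rw [hm, Ideal.span_le]
      rintro p hp
      simp only [Set.mem_insert_iff, Set.mem_singleton_iff] at hp
      rcases hp with rfl | rfl <;> simp [RingHom.mem_ker]
    exact hle hsm
  -- transfer certificate 1
  have haevφ : Polynomial.aeval (X 1 : R2) φ' = C c * Polynomial.aeval (X 1) φ := by
    rw [hφ'φ, map_mul, Polynomial.aeval_C, MvPolynomial.algebraMap_eq]
  rw [haevφ] at hc1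
  have hcert1 : (C c * s1) * (X 0 - Polynomial.aeval (X 1) φ) = α1 * f2 + β1 * f2s := by
    linear_combination hc1
  have hs1' : MvPolynomial.aeval (fun _ : Fin 2 => a) (C c * s1) ≠ 0 := by
    rw [map_mul, MvPolynomial.aeval_C]
    simp only [Algebra.algebraMap_self, RingHom.id_apply]
    exact mul_ne_zero hc hs1
  have hJ1 : algebraMap R2 (Localization.AtPrime m) (X 0 - Polynomial.aeval (X 1) φ) ∈ Jd m :=
    memJ a m hcompl (C c * s1) _ α1 β1 hs1' hcert1
  have hJ2 : algebraMap R2 (Localization.AtPrime m) ((X 1 - C a) ^ 3) ∈ Jd m :=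
    memJ a m hcompl s2 _ α2 β2 hs2 hc2
  show Module.finrank ℂ ((Localization.AtPrime m) ⧸ Jd m) = 3
  exact final a φ m hφ hψf2 hψf2s hmem hJ1 hJ2

end Stmt12Aux

set_option maxHeartbeats 4000000 in
/-- The curves f₂(x,y) = 0 and f₂(y,x) = 0 have intersection multiplicity
exactly 3 at each of the points (0,0), (1,1), (-1,-1): the intersection
multiplicity at (a,b) is the ℂ-dimension of the quotient of the local ring
of ℂ² at (a,b) (the localization of ℂ[x,y] at the maximal ideal of the
point) by the ideal generated by the two polynomials. -/
theorem stmt_12 :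
    ∀ a : ℂ, a ∈ ({0, 1, -1} : Set ℂ) →
      ∀ (m : Ideal R2), m = Ideal.span {X 0 - C a, X 1 - C a} →
      ∀ (_ : m.IsPrime),
        Module.finrank ℂ
          ((Localization.AtPrime m) ⧸
            Ideal.map (algebraMap R2 (Localization.AtPrime m))
              (Ideal.span {f2, f2s})) = 3 := by
  intro a ha m hm hP
  simp only [Set.mem_insert_iff, Set.mem_singleton_iff] at ha
  rcases ha with rfl | rfl | rfl
  · exact Stmt12Aux.aux (0 : ℂ) 1 (by norm_num)
      ((-1)*Polynomial.X + Polynomial.X^2) ((4) + (-4)*Polynomial.X + Polynomial.X^2) ((-2) + (7)*Polynomial.X + (-3)*Polynomial.X^2 + (-2)*Polynomial.X^3 + Polynomial.X^4)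
      (by simp; try norm_num)
      (by simp only [Polynomial.add_comp, Polynomial.sub_comp, Polynomial.mul_comp, Polynomial.pow_comp, Polynomial.X_comp, Polynomial.C_comp, Polynomial.one_comp, Polynomial.ofNat_comp, Polynomial.neg_comp, Polynomial.natCast_comp, map_neg, map_one, map_zero, map_ofNat]; ring)
      (by simp only [Polynomial.add_comp, Polynomial.sub_comp, Polynomial.mul_comp, Polynomial.pow_comp, Polynomial.X_comp, Polynomial.C_comp, Polynomial.one_comp, Polynomial.ofNat_comp, Polynomial.neg_comp, Polynomial.natCast_comp, map_neg, map_one, map_zero, map_ofNat]; ring)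
      ((6) + (-3)*X 1 + (3)*X 1 ^ 2 + (-12)*X 0*X 1 + (3)*X 0*X 1 ^ 2 + (3)*X 0 ^ 2) ((2) + (-3)*X 1 + (4)*X 0 + (-1)*X 0 ^ 2) ((4) + (-4)*X 1 + X 1 ^ 2)
      ((6) + (-3)*X 1 + (3)*X 1 ^ 2 + (-12)*X 0*X 1 + (3)*X 0*X 1 ^ 2 + (3)*X 0 ^ 2) ((1) + X 1 + (3)*X 1 ^ 2 + (-1)*X 0 + (-4)*X 0*X 1 + X 0 ^ 2 + X 0 ^ 2*X 1) ((-1) + (3)*X 1 ^ 2 + (-1)*X 1 ^ 3)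
      (by simp only [map_add, map_sub, map_mul, map_pow, map_neg, map_one, map_zero, map_ofNat, MvPolynomial.aeval_X]; norm_num)
      (by simp only [map_add, map_sub, map_mul, map_pow, map_neg, map_one, map_zero, map_ofNat, MvPolynomial.aeval_X]; norm_num)
      (by simp only [f2, f2s, map_add, map_sub, map_mul, map_pow, map_neg, map_one, map_zero, map_ofNat, Polynomial.aeval_X, MvPolynomial.aeval_X]; ring)
      (by simp only [f2, f2s, map_add, map_sub, map_mul, map_pow, map_neg, map_one, map_zero, map_ofNat, Polynomial.aeval_X, MvPolynomial.aeval_X]; ring)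
      m hm hP
  · exact Stmt12Aux.aux (1 : ℂ) 1 (by norm_num)
      ((7) + (-11)*Polynomial.X + (5)*Polynomial.X^2) ((-13) + (-1)*Polynomial.X + (5)*Polynomial.X^2) ((-37) + (79)*Polynomial.X + (-135)*Polynomial.X^2 + (175)*Polynomial.X^3 + (125)*Polynomial.X^4)
      (by simp; try norm_num)
      (by simp only [Polynomial.add_comp, Polynomial.sub_comp, Polynomial.mul_comp, Polynomial.pow_comp, Polynomial.X_comp, Polynomial.C_comp, Polynomial.one_comp, Polynomial.ofNat_comp, Polynomial.neg_comp, Polynomial.natCast_comp, map_neg, map_one, map_zero, map_ofNat]; ring)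
      (by simp only [Polynomial.add_comp, Polynomial.sub_comp, Polynomial.mul_comp, Polynomial.pow_comp, Polynomial.X_comp, Polynomial.C_comp, Polynomial.one_comp, Polynomial.ofNat_comp, Polynomial.neg_comp, Polynomial.natCast_comp, map_neg, map_one, map_zero, map_ofNat]; ring)
      ((3)*X 1 + (-3)*X 1 ^ 2 + (3)*X 0 + (12)*X 0*X 1 + (-12)*X 0*X 1 ^ 2 + (12)*X 0 ^ 2 + (18)*X 0 ^ 2*X 1 + (-9)*X 0 ^ 2*X 1 ^ 2) ((-28) + (15)*X 1 + (-74)*X 0 + (45)*X 0*X 1 + (5)*X 0 ^ 2) ((7) + (11)*X 1 + (-5)*X 1 ^ 2)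
      ((24)*X 1 + (3)*X 1 ^ 2 + (24)*X 0 + (24)*X 0*X 1 + (3)*X 0*X 1 ^ 2 + (-3)*X 0 ^ 2 + (-36)*X 0 ^ 2*X 1 + (9)*X 0 ^ 3) ((-5) + (4)*X 1 + (3)*X 1 ^ 2 + (-16)*X 0 + (20)*X 0*X 1 + (10)*X 0 ^ 2 + (-14)*X 0 ^ 2*X 1) ((-19) + (60)*X 1 + (-57)*X 1 ^ 2 + (14)*X 1 ^ 3)
      (by simp only [map_add, map_sub, map_mul, map_pow, map_neg, map_one, map_zero, map_ofNat, MvPolynomial.aeval_X]; norm_num)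
      (by simp only [map_add, map_sub, map_mul, map_pow, map_neg, map_one, map_zero, map_ofNat, MvPolynomial.aeval_X]; norm_num)
      (by simp only [f2, f2s, map_add, map_sub, map_mul, map_pow, map_neg, map_one, map_zero, map_ofNat, Polynomial.aeval_X, MvPolynomial.aeval_X]; ring)
      (by simp only [f2, f2s, map_add, map_sub, map_mul, map_pow, map_neg, map_one, map_zero, map_ofNat, Polynomial.aeval_X, MvPolynomial.aeval_X]; ring)
      m hm hP
  · exact Stmt12Aux.aux (-1 : ℂ) 3 (by norm_num)
      ((-13) + (-17)*Polynomial.X + (-7)*Polynomial.X^2) ((-45) + (39)*Polynomial.X + (-7)*Polynomial.X^2) ((-477) + (-489)*Polynomial.X + (-1071)*Polynomial.X^2 + (-441)*Polynomial.X^3 + (-343)*Polynomial.X^4)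
      (by simp; try norm_num)
      (by simp only [Polynomial.add_comp, Polynomial.sub_comp, Polynomial.mul_comp, Polynomial.pow_comp, Polynomial.X_comp, Polynomial.C_comp, Polynomial.one_comp, Polynomial.ofNat_comp, Polynomial.neg_comp, Polynomial.natCast_comp, map_neg, map_one, map_zero, map_ofNat]; ring)
      (by simp only [Polynomial.add_comp, Polynomial.sub_comp, Polynomial.mul_comp, Polynomial.pow_comp, Polynomial.X_comp, Polynomial.C_comp, Polynomial.one_comp, Polynomial.ofNat_comp, Polynomial.neg_comp, Polynomial.natCast_comp, map_neg, map_one, map_zero, map_ofNat]; ring)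
      ((-3)*X 1 + (-3)*X 1 ^ 2 + (-3)*X 0 + (12)*X 0*X 1 + (6)*X 0*X 1 ^ 2 + (18)*X 0 ^ 2 + (-36)*X 0 ^ 2*X 1 + (9)*X 0 ^ 2*X 1 ^ 2) ((-156) + (-21)*X 1 + (342)*X 0 + (63)*X 0*X 1 + (-63)*X 0 ^ 2) ((117) + (-225)*X 1 + (63)*X 1 ^ 2)
      ((-8)*X 1 + X 1 ^ 2 + (-8)*X 0 + (8)*X 0*X 1 + X 0*X 1 ^ 2 + (15)*X 0 ^ 2 + (-9)*X 0 ^ 3) ((-5) + (-10)*X 1 + X 1 ^ 2 + (12)*X 0 + (24)*X 0*X 1 + (-6)*X 0 ^ 2 + (-6)*X 0 ^ 2*X 1) ((-3) + (-18)*X 1 + (-27)*X 1 ^ 2 + (6)*X 1 ^ 3)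
      (by simp only [map_add, map_sub, map_mul, map_pow, map_neg, map_one, map_zero, map_ofNat, MvPolynomial.aeval_X]; norm_num)
      (by simp only [map_add, map_sub, map_mul, map_pow, map_neg, map_one, map_zero, map_ofNat, MvPolynomial.aeval_X]; norm_num)
      (by simp only [f2, f2s, map_add, map_sub, map_mul, map_pow, map_neg, map_one, map_zero, map_ofNat, Polynomial.aeval_X, MvPolynomial.aeval_X]; ring)
      (by simp only [f2, f2s, map_add, map_sub, map_mul, map_pow, map_neg, map_one, map_zero, map_ofNat, Polynomial.aeval_X, MvPolynomial.aeval_X]; ring)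
      m hm hP
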